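/- Let N and d be positive integers and let F_1, …, F_d be diagonal N×N real matrices that form an orthonormal family with respect to the Frobenius inner product (i.e., tr(F_i F_j) = δ_{i,j}). Then Σ_{i=1}^d Σ_{j=1}^d ‖F_i F_j‖_F² ≤ d, where ‖M‖_F² = tr(MᵀM) denotes the squared Frobenius norm. -/

import Mathlib

open Matrix RealInnerProductSpace

/-- If `F₁, …, F_d` are diagonal `N × N` real matrices, orthonormal for the Frobenius
inner product, then `∑_{i,j} ‖F_i F_j‖_F² ≤ d`. -/
theorem stmt_17 (N d : ℕ) (hN : 0 < N) (hd : 0 < d)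
    (F : Fin d → Matrix (Fin N) (Fin N) ℝ)
    (hdiag : ∀ i, (F i).IsDiag)
    (horth : ∀ i j, Matrix.trace ((F i)ᵀ * F j) = if i = j then (1 : ℝ) else 0) :
    ∑ i, ∑ j, Matrix.trace ((F i * F j)ᵀ * (F i * F j)) ≤ (d : ℝ) := by
  set g : Fin d → Fin N → ℝ := fun i k => F i k k with hg
  have hF : ∀ i, F i = Matrix.diagonal (g i) := fun i => ((hdiag i).diagonal_diag).symm
  have htr : ∀ i j, Matrix.trace ((F i)ᵀ * F j) = ∑ k, g i k * g j k := by
    intro i j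
    rw [hF i, hF j]
    simp [Matrix.diagonal_transpose, Matrix.diagonal_mul_diagonal, Matrix.trace_diagonal]
  -- orthonormal family in EuclideanSpace
  set v : Fin d → EuclideanSpace ℝ (Fin N) := fun i => (WithLp.equiv 2 _).symm (g i) with hv
  have hinner : ∀ i j, inner ℝ (v i) (v j) = (∑ k, g i k * g j k : ℝ) := by
    intro i j
    simp [hv, PiLp.inner_apply, RCLike.inner_apply, mul_comm]
  have hortho : Orthonormal ℝ v := by
    rw [orthonormal_iff_ite]
    intro i j
    rw [hinner, ← htr, horth]
  -- Bessel: for each k, ∑ i, (g i k)^2 ≤ 1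
  have hbessel : ∀ k, ∑ i, (g i k) ^ 2 ≤ 1 := by
    intro k
    have := hortho.sum_inner_products_le (s := Finset.univ) (EuclideanSpace.single k (1 : ℝ))
    simpa [hv, PiLp.inner_apply, RCLike.inner_apply, EuclideanSpace.single_apply,
      Finset.mul_sum, sq_abs, EuclideanSpace.norm_single] using this
  -- main computation
  have hterm : ∀ i j, Matrix.trace ((F i * F j)ᵀ * (F i * F j))
      = ∑ k, (g i k) ^ 2 * (g j k) ^ 2 := by
    intro i j
    rw [hF i, hF j]
    simp [Matrix.diagonal_mul_diagonal, Matrix.diagonal_transpose, Matrix.trace_diagonal,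
      mul_pow, mul_mul_mul_comm, sq]
  calc ∑ i, ∑ j, Matrix.trace ((F i * F j)ᵀ * (F i * F j))
      = ∑ k, (∑ i, (g i k) ^ 2) * (∑ j, (g j k) ^ 2) := by
        simp only [hterm]
        have e1 : ∑ i : Fin d, ∑ j : Fin d, ∑ k : Fin N, (g i k) ^ 2 * (g j k) ^ 2
            = ∑ i : Fin d, ∑ k : Fin N, ∑ j : Fin d, (g i k) ^ 2 * (g j k) ^ 2 :=
          Finset.sum_congr rfl fun i _ => Finset.sum_comm
        have e2 : ∑ i : Fin d, ∑ k : Fin N, ∑ j : Fin d, (g i k) ^ 2 * (g j k) ^ 2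
            = ∑ k : Fin N, ∑ i : Fin d, ∑ j : Fin d, (g i k) ^ 2 * (g j k) ^ 2 :=
          Finset.sum_comm
        rw [e1, e2]
        exact Finset.sum_congr rfl fun k _ => (Finset.sum_mul_sum _ _ _ _).symm
    _ ≤ ∑ k, (∑ i, (g i k) ^ 2) * 1 := by
        refine Finset.sum_le_sum fun k _ => ?_
        have h1 : (0:ℝ) ≤ ∑ i, (g i k) ^ 2 := Finset.sum_nonneg fun i _ => sq_nonneg _
        exact mul_le_mul_of_nonneg_left (hbessel k) h1
    _ = ∑ i, ∑ k, (g i k) ^ 2 := by rw [Finset.sum_comm]; simp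
    _ = ∑ i : Fin d, (1 : ℝ) := by
        refine Finset.sum_congr rfl fun i _ => ?_
        have := horth i i
        rw [htr] at this
        simpa [sq] using this
    _ = (d : ℝ) := by simp
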